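/- arXiv:1603.03918 — 2 statements merged into one kernel-verified Lean document; each statement's English description precedes it below -/
import Mathlib

section
/- Let (A, G, α, u) be a twisted C*-dynamical system with G discrete, u(s⁻¹, s) = 1 for all s ∈ G, and F ⊆ G a finite set. Define ψ : A ⊗ M_F(ℂ) → A ⋊_{(α,u),r} G on elementary tensors by ψ(a ⊗ e_{p,q}) = (1/|F|) π_α(α_p(a) u(p, q⁻¹)) λ_u(p q⁻¹). Then for any family (a_p)_{p ∈ F} in A, ψ(Σ_{p,q ∈ F} a_p* a_q ⊗ e_{p,q}) = (1/|F|) (Σ_{p ∈ F} π_α(a_p) λ_u(p⁻¹))* (Σ_{q ∈ F} π_α(a_q) λ_u(q⁻¹)); in particular ψ maps positive elements to positive elements. -/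
/-- Let `(A, G, α, u)` be a twisted C*-dynamical system with `u(s⁻¹,s) = 1`, realized on
`ℓ²(G, H₀)` via the regular covariant pair `(π, Λu)`, and `F ⊆ G` a nonempty finite set.
The map `ψ : A ⊗ M_F(ℂ) → A ⋊_{(α,u),r} G`, `ψ(a ⊗ e_{p,q}) = (1/|F|) π(α_p(a) u(p,q⁻¹))
Λu(pq⁻¹)`, applied (by linearity) to `Σ_{p,q ∈ F} a_p* a_q ⊗ e_{p,q}` yields
`(1/|F|) (Σ_p π(a_p) Λu(p⁻¹))* (Σ_q π(a_q) Λu(q⁻¹))`; in particular the image is a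
positive operator. -/
theorem stmt5 {A : Type*} [CStarAlgebra A] {G : Type*} [Group G] [DecidableEq G]
    {H₀ : Type*} [NormedAddCommGroup H₀] [InnerProductSpace ℂ H₀] [CompleteSpace H₀]
    (ρ : A →⋆ₐ[ℂ] (H₀ →L[ℂ] H₀)) (hρ : Function.Injective ρ)
    (α : G → (A ≃⋆ₐ[ℂ] A)) (u : G → G → A)
    (hu : ∀ s t : G, u s t ∈ unitary A)
    (hcov : ∀ s t : G, ∀ a : A, α s (α t a) = u s t * α (s * t) a * star (u s t))
    (hcoc : ∀ r s t : G, α r (u s t) * u r (s * t) = u r s * u (r * s) t)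
    (hone : ∀ s : G, u 1 s = 1 ∧ u s 1 = 1)
    (π : A → (lp (fun _ : G => H₀) 2 →L[ℂ] lp (fun _ : G => H₀) 2))
    (Λu : G → (lp (fun _ : G => H₀) 2 →L[ℂ] lp (fun _ : G => H₀) 2))
    (hπ : ∀ (x : A) (ξ : lp (fun _ : G => H₀) 2) (l : G),
      (π x ξ) l = ρ (α l⁻¹ x) (ξ l))
    (hLam : ∀ (s : G) (ξ : lp (fun _ : G => H₀) 2) (l : G),
      (Λu s ξ) l = ρ (u l⁻¹ s) (ξ (s⁻¹ * l)))
    (hΛunit : ∀ s : G, Λu s ∈ unitary (lp (fun _ : G => H₀) 2 →L[ℂ] lp (fun _ : G => H₀) 2))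
    (hu1 : ∀ s : G, u s⁻¹ s = 1)
    (F : Finset G) (hF : F.Nonempty) (a : G → A) :
    (∑ p ∈ F, ∑ q ∈ F, ((F.card : ℂ))⁻¹ •
        (π (α p (star (a p) * a q) * u p q⁻¹) * Λu (p * q⁻¹)))
      = ((F.card : ℂ))⁻¹ •
        (star (∑ p ∈ F, π (a p) * Λu p⁻¹) * ∑ q ∈ F, π (a q) * Λu q⁻¹) ∧
    ∃ y : lp (fun _ : G => H₀) 2 →L[ℂ] lp (fun _ : G => H₀) 2,
      (∑ p ∈ F, ∑ q ∈ F, ((F.card : ℂ))⁻¹ •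
        (π (α p (star (a p) * a q) * u p q⁻¹) * Λu (p * q⁻¹))) = star y * y := by
  -- π is multiplicative
  have hπmul : ∀ x y : A, π x * π y = π (x * y) := by
    intro x y
    refine ContinuousLinearMap.ext fun ξ => lp.ext (funext fun l => ?_)
    rw [ContinuousLinearMap.mul_apply, hπ, hπ, hπ, map_mul, map_mul,
      ContinuousLinearMap.mul_apply]
  have hπone : π 1 = 1 := by
    refine ContinuousLinearMap.ext fun ξ => lp.ext (funext fun l => ?_)
    rw [hπ, map_one, map_one]; rfl
  -- covariance
  have hcovop : ∀ (s : G) (x : A), Λu s * π x = π (α s x) * Λu s := by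
    intro s x
    refine ContinuousLinearMap.ext fun ξ => lp.ext (funext fun l => ?_)
    rw [ContinuousLinearMap.mul_apply, ContinuousLinearMap.mul_apply, hLam, hπ, hπ, hLam,
      ← ContinuousLinearMap.mul_apply (ρ _) (ρ _), ← map_mul,
      ← ContinuousLinearMap.mul_apply (ρ _) (ρ _), ← map_mul]
    congr 2
    rw [mul_inv_rev, inv_inv, hcov l⁻¹ s x, mul_assoc, mul_assoc,
      (Unitary.mem_iff.mp (hu l⁻¹ s)).1, mul_one]
  -- product of Λ's
  have hΛmul : ∀ s t : G, Λu s * Λu t = π (u s t) * Λu (s * t) := by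
    intro s t
    refine ContinuousLinearMap.ext fun ξ => lp.ext (funext fun l => ?_)
    rw [ContinuousLinearMap.mul_apply, ContinuousLinearMap.mul_apply, hLam, hLam, hπ, hLam,
      ← ContinuousLinearMap.mul_apply (ρ _) (ρ _), ← map_mul,
      ← ContinuousLinearMap.mul_apply (ρ _) (ρ _), ← map_mul]
    rw [mul_inv_rev, inv_inv, hcoc l⁻¹ s t]
    congr 2
    group
  have hΛone : Λu 1 = 1 := by
    refine ContinuousLinearMap.ext fun ξ => lp.ext (funext fun l => ?_)
    rw [hLam, (hone l⁻¹).2, map_one, inv_one, one_mul]; rfl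
  have hΛstar : ∀ s : G, star (Λu s) = Λu s⁻¹ := by
    intro s
    have h1 : Λu s⁻¹ * Λu s = 1 := by
      rw [hΛmul, hu1, hπone, inv_mul_cancel, hΛone, one_mul]
    have h2 : Λu s * star (Λu s) = 1 := (Unitary.mem_iff.mp (hΛunit s)).2
    calc star (Λu s) = (Λu s⁻¹ * Λu s) * star (Λu s) := by rw [h1, one_mul]
      _ = Λu s⁻¹ * (Λu s * star (Λu s)) := by rw [mul_assoc]
      _ = Λu s⁻¹ := by rw [h2, mul_one]
  have hπstar : ∀ x : A, star (π x) = π (star x) := by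
    intro x
    have : π (star x) = ContinuousLinearMap.adjoint (π x) := by
      rw [ContinuousLinearMap.eq_adjoint_iff]
      intro ξ η
      rw [lp.inner_eq_tsum, lp.inner_eq_tsum]
      refine tsum_congr fun l => ?_
      rw [hπ, hπ, map_star, map_star, ContinuousLinearMap.star_eq_adjoint,
        ContinuousLinearMap.adjoint_inner_left]
    rw [ContinuousLinearMap.star_eq_adjoint, this]
  -- the key term computation
  have hterm : ∀ p q : G, star (π (a p) * Λu p⁻¹) * (π (a q) * Λu q⁻¹)
      = π (α p (star (a p) * a q) * u p q⁻¹) * Λu (p * q⁻¹) := by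
    intro p q
    rw [star_mul, hΛstar, inv_inv, hπstar, mul_assoc (Λu p), ← mul_assoc (π (star (a p))),
      hπmul, ← mul_assoc, hcovop, mul_assoc, hΛmul, ← mul_assoc, hπmul]
  have h1 : (∑ p ∈ F, ∑ q ∈ F, ((F.card : ℂ))⁻¹ •
        (π (α p (star (a p) * a q) * u p q⁻¹) * Λu (p * q⁻¹)))
      = ((F.card : ℂ))⁻¹ •
        (star (∑ p ∈ F, π (a p) * Λu p⁻¹) * ∑ q ∈ F, π (a q) * Λu q⁻¹) := by
    rw [star_sum, Finset.sum_mul_sum, Finset.smul_sum]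
    refine Finset.sum_congr rfl fun p _ => ?_
    rw [Finset.smul_sum]
    exact Finset.sum_congr rfl fun q _ => by rw [hterm p q]
  refine ⟨h1, ?_⟩
  set S := ∑ q ∈ F, π (a q) * Λu q⁻¹ with hS
  refine ⟨((Real.sqrt F.card : ℂ))⁻¹ • S, ?_⟩
  rw [h1, star_smul, smul_mul_smul_comm]
  congr 1
  rw [star_inv₀, Complex.star_def, Complex.conj_ofReal, ← mul_inv, ← Complex.ofReal_mul,
    Real.mul_self_sqrt (by positivity)]
  norm_num
end

section
/- Let (A, G, α, u) be a twisted C*-dynamical system with G discrete and u(s⁻¹, s) = 1 for all s ∈ G, and let F ⊆ G be a finite set. Let φ : A ⋊_{(α,u),r} G → A ⊗ M_F(ℂ) be the compression φ(x) = (1⊗P) x (1⊗P), where P projects ℓ²(G) onto span{δ_g : g ∈ F}, and let ψ : A ⊗ M_F(ℂ) → A ⋊_{(α,u),r} G be given by ψ(a ⊗ e_{p,q}) = (1/|F|) π_α(α_p(a) u(p,q⁻¹)) λ_u(pq⁻¹). Then for every a ∈ A and s ∈ G: ψ(φ(π_α(a) λ_u(s))) = (|F ∩ sF| / |F|) ·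 π_α(a) λ_u(s). -/
/-- Let `(A, G, α, u)` be a twisted C*-dynamical system with `u(s⁻¹,s) = 1`, realized on
`ℓ²(G, H₀)` via the regular covariant pair `(π, Λu)`, and `F ⊆ G` a nonempty finite set.
With `φ` the compression by `1 ⊗ P_F` (so that `φ(π(a)Λu(s)) = Σ_{p ∈ F ∩ sF}
α_{p⁻¹}(a)u(p⁻¹,s) ⊗ e_{p,s⁻¹p}`) and `ψ(a ⊗ e_{p,q}) = (1/|F|) π(α_p(a)u(p,q⁻¹))Λu(pq⁻¹)`,
we have `ψ(φ(π(a)Λu(s))) = (|F ∩ sF|/|F|) · π(a)Λu(s)` for all `a ∈ A`, `s ∈ G`. -/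
theorem stmt6 {A : Type*} [CStarAlgebra A] {G : Type*} [Group G] [DecidableEq G]
    {H₀ : Type*} [NormedAddCommGroup H₀] [InnerProductSpace ℂ H₀] [CompleteSpace H₀]
    (ρ : A →⋆ₐ[ℂ] (H₀ →L[ℂ] H₀)) (hρ : Function.Injective ρ)
    (α : G → (A ≃⋆ₐ[ℂ] A)) (u : G → G → A)
    (hu : ∀ s t : G, u s t ∈ unitary A)
    (hcov : ∀ s t : G, ∀ a : A, α s (α t a) = u s t * α (s * t) a * star (u s t))
    (hcoc : ∀ r s t : G, α r (u s t) * u r (s * t) = u r s * u (r * s) t)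
    (hone : ∀ s : G, u 1 s = 1 ∧ u s 1 = 1)
    (π : A → (lp (fun _ : G => H₀) 2 →L[ℂ] lp (fun _ : G => H₀) 2))
    (Λu : G → (lp (fun _ : G => H₀) 2 →L[ℂ] lp (fun _ : G => H₀) 2))
    (hπ : ∀ (x : A) (ξ : lp (fun _ : G => H₀) 2) (l : G),
      (π x ξ) l = ρ (α l⁻¹ x) (ξ l))
    (hLam : ∀ (s : G) (ξ : lp (fun _ : G => H₀) 2) (l : G),
      (Λu s ξ) l = ρ (u l⁻¹ s) (ξ (s⁻¹ * l)))
    (hΛunit : ∀ s : G, Λu s ∈ unitary (lp (fun _ : G => H₀) 2 →L[ℂ] lp (fun _ : G => H₀) 2))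
    (hu1 : ∀ s : G, u s⁻¹ s = 1)
    (F : Finset G) (hF : F.Nonempty) :
    ∀ (a : A) (s : G),
      (∑ p ∈ F ∩ F.image (fun t => s * t), ((F.card : ℂ))⁻¹ •
          (π (α p (α p⁻¹ a * u p⁻¹ s) * u p (s⁻¹ * p)⁻¹) * Λu (p * (s⁻¹ * p)⁻¹)))
        = (((F ∩ F.image (fun t => s * t)).card : ℂ) / (F.card : ℂ)) • (π a * Λu s) := by
  intro a s
  have hup : ∀ p : G, u p p⁻¹ = 1 := by
    intro p
    have h := hcoc p p⁻¹ p
    simpa [hu1, (hone p).1, (hone p).2] using h.symm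
  have hg : ∀ p : G, p * (s⁻¹ * p)⁻¹ = s := by intro p; group
  have key : ∀ p : G, α p (α p⁻¹ a * u p⁻¹ s) * u p (s⁻¹ * p)⁻¹ = a := by
    intro p
    have ha1 : ∀ b : A, α 1 b = b := by
      intro b
      have h := hcov 1 1 b
      simp [(hone 1).1] at h
      exact h
    have h1 : α p (α p⁻¹ a) = a := by
      have h := hcov p p⁻¹ a
      simpa [hup p, ha1] using h
    have h2 : α p (u p⁻¹ s) * u p (p⁻¹ * s) = 1 := by
      have h := hcoc p p⁻¹ s
      simpa [hup, (hone s).1] using h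
    have h3 : (s⁻¹ * p)⁻¹ = p⁻¹ * s := by group
    rw [map_mul, h3, mul_assoc, h2, mul_one, h1]
  have hterm : ∀ p ∈ F ∩ F.image (fun t => s * t),
      ((F.card : ℂ))⁻¹ •
          (π (α p (α p⁻¹ a * u p⁻¹ s) * u p (s⁻¹ * p)⁻¹) * Λu (p * (s⁻¹ * p)⁻¹))
        = ((F.card : ℂ))⁻¹ • (π a * Λu s) := by
    intro p _
    rw [key p, hg p]
  rw [Finset.sum_congr rfl hterm, Finset.sum_const, ← Nat.cast_smul_eq_nsmul ℂ,
    smul_smul, div_eq_mul_inv]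
end
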